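/- Let m, n be positive integers with mn even. Then the Kasteleyn matrix K of the m×n grid graph is invertible, and its inverse is given by the spectral formula K^{−1}(u,v) = (4/((m+1)(n+1)))·Σ_{j=1}^{m} Σ_{k=1}^{n} f_{j,k}(u)·f_{j,k}(v)/λ_{j,k}, where f_{j,k}(x,y) = sin(πj(x+1)/(m+1))·sin(πk(y+1)/(n+1)) and λ_{j,k} = 2cos(πj/(m+1)) + 2i·cos(πk/(n+1)). -/

import Mathlib

open Real Finset

/-- The m×n grid graph on vertex set Fin m × Fin n: (x,y) ~ (x',y') iff |x-x'|+|y-y'| = 1. -/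
def gridGraph (m n : ℕ) : SimpleGraph (Fin m × Fin n) :=
  SimpleGraph.fromRel (fun u v =>
    (u.1 = v.1 ∧ u.2.val + 1 = v.2.val) ∨ (u.2 = v.2 ∧ u.1.val + 1 = v.1.val))

/-- The Kasteleyn matrix of the m×n grid graph: horizontal edges weighted 1,
vertical edges weighted i, all other entries 0. -/
def kasteleyn (m n : ℕ) : Matrix (Fin m × Fin n) (Fin m × Fin n) ℂ :=
  Matrix.of fun u v =>
    if u.2 = v.2 ∧ (u.1.val + 1 = v.1.val ∨ v.1.val + 1 = u.1.val) then 1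
    else if u.1 = v.1 ∧ (u.2.val + 1 = v.2.val ∨ v.2.val + 1 = u.2.val) then Complex.I
    else 0


lemma cos_sum_formula (N r : ℕ) (hN : 2 ≤ N) (hr : 0 < r) (hr2 : r < 2*N) :
    ∑ j ∈ Finset.Icc 1 (N-1), Real.cos (π * r * j / N) = if Even r then -1 else 0 := by
  set φ : ℝ := π * r / (2*N) with hφ
  have hNpos : (0:ℝ) < N := by positivity
  have hφpos : 0 < φ := div_pos (by positivity) (by positivity)
  have hφlt : φ < π := by
    rw [hφ, div_lt_iff₀ (by positivity)]
    have : (r:ℝ) < 2*N := by exact_mod_cast hr2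
    nlinarith [Real.pi_pos]
  have hsφ : Real.sin φ ≠ 0 := ne_of_gt (Real.sin_pos_of_pos_of_lt_pi hφpos hφlt)
  set g : ℕ → ℝ := fun i => Real.sin ((2*(i:ℝ)+1) * φ) with hg
  have key : ∀ i : ℕ, 2 * Real.sin φ * Real.cos (π * r * ((i:ℝ)+1) / N)
      = g (i+1) - g i := by
    intro i
    have h1 : π * r * ((i:ℝ)+1) / N = 2*((i:ℝ)+1) * φ := by
      field_simp [hφ]; rw [hφ]; field_simp
    have h2 : g (i+1) = Real.sin (2*((i:ℝ)+1)*φ + φ) := by rw [hg]; push_cast; ring_nf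
    have h3 : g i = Real.sin (2*((i:ℝ)+1)*φ - φ) := by rw [hg]; push_cast; ring_nf
    rw [h1, h2, h3, Real.sin_add, Real.sin_sub]
    ring
  have hsum : 2 * Real.sin φ * ∑ j ∈ Finset.Icc 1 (N-1), Real.cos (π * r * j / N)
      = g (N-1) - g 0 := by
    have hIcc : Finset.Icc 1 (N-1) = Finset.Ico 1 N := by
      ext x; simp [Finset.mem_Icc, Finset.mem_Ico]; omega
    rw [Finset.mul_sum, ← Finset.sum_range_sub g, hIcc, Finset.sum_Ico_eq_sum_range]
    apply Finset.sum_congr (by norm_num)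
    intro i _
    have h5 : ((1 + i : ℕ) : ℝ) = (i:ℝ) + 1 := by push_cast; ring
    rw [h5, key i]
  have hend : g (N-1) = -((-1)^r * Real.sin φ) := by
    have h4 : (2*((N-1:ℕ):ℝ)+1) * φ = r * π - φ := by
      have h6 : ((N-1:ℕ):ℝ) = (N:ℝ) - 1 := by
        have : 1 ≤ N := by omega
        push_cast [this]; ring
      rw [h6, hφ]; field_simp; ring
    rw [hg]; simp only []; rw [h4, Real.sin_nat_mul_pi_sub]
  have hstart : g 0 = Real.sin φ := by rw [hg]; norm_num
  rw [hend, hstart] at hsum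
  rcases Nat.even_or_odd r with he | ho
  · rw [if_pos he]
    rw [he.neg_one_pow] at hsum
    have h7 : 2 * Real.sin φ * ∑ j ∈ Finset.Icc 1 (N-1), Real.cos (π * r * j / N)
        = 2 * Real.sin φ * (-1) := by rw [hsum]; ring
    exact mul_left_cancel₀ (by simp [hsφ]) h7
  · rw [if_neg (Nat.not_even_iff_odd.mpr ho)]
    rw [ho.neg_one_pow] at hsum
    have h7 : 2 * Real.sin φ * ∑ j ∈ Finset.Icc 1 (N-1), Real.cos (π * r * j / N)
        = 2 * Real.sin φ * 0 := by rw [hsum]; ring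
    exact mul_left_cancel₀ (by simp [hsφ]) h7


lemma orth_aux (N a b : ℕ) (hN : 2 ≤ N) (ha1 : 1 ≤ a) (ha2 : a ≤ N-1)
    (hb1 : 1 ≤ b) (hba : b ≤ a) :
    ∑ j ∈ Finset.Icc 1 (N-1), Real.sin (π * j * a / N) * Real.sin (π * j * b / N)
      = if a = b then (N:ℝ)/2 else 0 := by
  have hNpos : (0:ℝ) < N := by positivity
  set d : ℕ := a - b with hd
  have hab : a = b + d := by omega
  have hterm : ∀ j : ℕ, Real.sin (π * j * a / N) * Real.sin (π * j * b / N)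
      = (Real.cos (π * (d:ℝ) * j / N) - Real.cos (π * ((a+b : ℕ):ℝ) * j / N)) / 2 := by
    intro j
    have e1 : π * (d:ℝ) * j / N = π * j * a / N - π * j * b / N := by
      rw [hab]; push_cast; field_simp; ring
    have e2 : π * ((a+b:ℕ):ℝ) * j / N = π * j * a / N + π * j * b / N := by
      push_cast; field_simp
    rw [e1, e2, Real.cos_sub, Real.cos_add]
    ring
  have hsplit : ∑ j ∈ Finset.Icc 1 (N-1), Real.sin (π * j * a / N) * Real.sin (π * j * b / N)
      = ((∑ j ∈ Finset.Icc 1 (N-1), Real.cos (π * (d:ℝ) * j / N))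
        - ∑ j ∈ Finset.Icc 1 (N-1), Real.cos (π * ((a+b:ℕ):ℝ) * j / N)) / 2 := by
    rw [← Finset.sum_sub_distrib, Finset.sum_div]
    exact Finset.sum_congr rfl fun j _ => hterm j
  have hC2 : ∑ j ∈ Finset.Icc 1 (N-1), Real.cos (π * ((a+b:ℕ):ℝ) * j / N)
      = if Even (a+b) then -1 else 0 :=
    cos_sum_formula N (a+b) hN (by omega) (by omega)
  by_cases hdb : a = b
  · rw [if_pos hdb]
    have hd0 : d = 0 := by omega
    have hC1 : ∑ j ∈ Finset.Icc 1 (N-1), Real.cos (π * (d:ℝ) * j / N) = (N:ℝ) - 1 := by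
      rw [hd0]
      have : ∀ j ∈ Finset.Icc 1 (N-1), Real.cos (π * ((0:ℕ):ℝ) * j / N) = 1 := by
        intro j _; norm_num
      rw [Finset.sum_congr rfl this, Finset.sum_const, Nat.card_Icc, nsmul_eq_mul, mul_one]
      have h9 : N - 1 + 1 - 1 = N - 1 := by omega
      rw [h9, Nat.cast_sub (by omega)]
      norm_num
    have heven : Even (a + b) := by rw [hdb]; exact ⟨b, by ring⟩
    rw [hsplit, hC1, hC2, if_pos heven]; ring
  · rw [if_neg hdb]
    have hd1 : 0 < d := by omega
    have hC1 : ∑ j ∈ Finset.Icc 1 (N-1), Real.cos (π * (d:ℝ) * j / N)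
        = if Even d then -1 else 0 :=
      cos_sum_formula N d hN hd1 (by omega)
    have hpar : (Even (a+b)) ↔ Even d := by
      simp only [Nat.even_iff]
      omega
    rw [hsplit, hC1, hC2]
    by_cases he : Even d
    · rw [if_pos he, if_pos (hpar.mpr he)]; ring
    · rw [if_neg he, if_neg (fun h => he (hpar.mp h))]; ring

lemma orth1D (N a b : ℕ) (hN : 2 ≤ N) (ha1 : 1 ≤ a) (ha2 : a ≤ N-1)
    (hb1 : 1 ≤ b) (hb2 : b ≤ N-1) :
    ∑ j ∈ Finset.Icc 1 (N-1), Real.sin (π * j * a / N) * Real.sin (π * j * b / N)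
      = if a = b then (N:ℝ)/2 else 0 := by
  rcases le_total b a with h | h
  · exact orth_aux N a b hN ha1 ha2 hb1 h
  · have := orth_aux N b a hN hb1 hb2 ha1 h
    have hsym : (if b = a then (N:ℝ)/2 else 0) = (if a = b then (N:ℝ)/2 else 0) := by
      by_cases hab : a = b
      · simp [hab]
      · rw [if_neg (fun h => hab h.symm), if_neg hab]
    rw [hsym] at this
    rw [← this]
    exact Finset.sum_congr rfl fun j _ => mul_comm _ _


lemma delta_sum (m c : ℕ) (h : ℕ → ℝ) :
    ∑ x : Fin m, (if x.val = c then h x.val else 0) = if c < m then h c else 0 := by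
  by_cases hc : c < m
  · rw [if_pos hc]
    rw [Finset.sum_eq_single (⟨c, hc⟩ : Fin m)]
    · simp
    · intro b _ hb
      rw [if_neg (fun h' => hb (Fin.ext h'))]
    · intro h'; exact absurd (Finset.mem_univ _) h'
  · rw [if_neg hc]
    apply Finset.sum_eq_zero
    intro x _
    have hne : x.val ≠ c := fun h' => hc (h' ▸ x.isLt)
    rw [if_neg hne]

lemma eigen1D (m j : ℕ) (hm : 1 ≤ m) (x : Fin m) :
    ∑ x' : Fin m, (if x.val + 1 = x'.val ∨ x'.val + 1 = x.val then (1:ℝ) else 0)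
        * Real.sin (π * j * (x'.val + 1) / (m+1))
      = 2 * Real.cos (π * j / (m+1)) * Real.sin (π * j * (x.val + 1) / (m+1)) := by
  set G : ℕ → ℝ := fun a => Real.sin (π * j * a / (m+1)) with hG
  have hGcast : ∀ a : ℕ, Real.sin (π * j * ((a:ℝ) + 1) / (m+1)) = G (a+1) := by
    intro a; rw [hG]; push_cast; ring_nf
  have hsplit : ∀ x' : Fin m,
      (if x.val + 1 = x'.val ∨ x'.val + 1 = x.val then (1:ℝ) else 0)
        * Real.sin (π * j * (x'.val + 1) / (m+1))
      = (if x'.val = x.val + 1 then G (x'.val + 1) else 0)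
        + (if x.val = x'.val + 1 then G (x'.val + 1) else 0) := by
    intro x'
    rw [hGcast]
    by_cases h1 : x.val + 1 = x'.val
    · rw [if_pos (Or.inl h1), if_pos h1.symm, if_neg (by omega)]
      ring
    · by_cases h2 : x'.val + 1 = x.val
      · rw [if_pos (Or.inr h2), if_neg (by omega), if_pos h2.symm]
        ring
      · rw [if_neg (by tauto), if_neg (by omega), if_neg (by omega)]
        ring
  rw [Finset.sum_congr rfl (fun x' _ => hsplit x'), Finset.sum_add_distrib]
  have hs1 : ∑ x' : Fin m, (if x'.val = x.val + 1 then G (x'.val + 1) else 0)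
      = G (x.val + 2) := by
    rw [delta_sum m (x.val+1) (fun a => G (a+1))]
    by_cases h : x.val + 1 < m
    · rw [if_pos h]
    · rw [if_neg h]
      have hxm : x.val + 1 = m := by omega
      have hz : G (x.val + 2) = 0 := by
        have hc2 : ((x.val + 2 : ℕ):ℝ) = (m:ℝ) + 1 := by
          have h' : ((x.val : ℕ):ℝ) + 1 = (m:ℝ) := by exact_mod_cast hxm
          push_cast; linarith
        show Real.sin (π * j * ((x.val+2:ℕ):ℝ) / (m+1)) = 0
        rw [hc2, show π * (j:ℝ) * ((m:ℝ)+1) / ((m:ℝ)+1) = j * π by field_simp]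
        exact Real.sin_nat_mul_pi j
      rw [hz]
  have hs2 : ∑ x' : Fin m, (if x.val = x'.val + 1 then G (x'.val + 1) else 0)
      = G x.val := by
    rcases Nat.eq_zero_or_pos x.val with h0 | hpos
    · rw [h0]
      have : ∀ x' : Fin m, (if (0:ℕ) = x'.val + 1 then G (x'.val + 1) else 0) = 0 := by
        intro x'; rw [if_neg (by omega)]
      rw [Finset.sum_congr rfl (fun x' _ => this x'), Finset.sum_const, smul_zero]
      simp [hG]
    · have hsub : ∀ x' : Fin m, (if x.val = x'.val + 1 then G (x'.val + 1) else 0)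
          = (if x'.val = x.val - 1 then G (x'.val + 1) else 0) := by
        intro x'
        by_cases h : x.val = x'.val + 1
        · rw [if_pos h, if_pos (by omega)]
        · rw [if_neg h, if_neg (by omega)]
      rw [Finset.sum_congr rfl (fun x' _ => hsub x'),
        delta_sum m (x.val - 1) (fun a => G (a+1)), if_pos (by omega)]
      congr 1
      omega
  rw [hs1, hs2]
  have hden : (m:ℝ) + 1 ≠ 0 := by positivity
  have e1 : G x.val = Real.sin (π * j * ((x.val:ℝ) + 1) / (m+1) - π * j / (m+1)) := by
    show Real.sin (π * j * ((x.val:ℕ):ℝ) / (m+1)) = _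
    congr 1
    field_simp
    ring
  have e2 : G (x.val + 2) = Real.sin (π * j * ((x.val:ℝ) + 1) / (m+1) + π * j / (m+1)) := by
    show Real.sin (π * j * ((x.val + 2 : ℕ):ℝ) / (m+1)) = _
    congr 1
    push_cast
    field_simp
    ring
  rw [e1, e2, Real.sin_sub, Real.sin_add]
  ring


lemma cos_zero_half (N a : ℕ) (h1 : 1 ≤ a) (h2 : a ≤ N - 1) (hN : 2 ≤ N)
    (hc : Real.cos (π * a / N) = 0) : N = 2 * a := by
  rcases Real.cos_eq_zero_iff.mp hc with ⟨t, ht⟩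
  have hNpos : (0:ℝ) < N := by positivity
  have hπ : (0:ℝ) < π := Real.pi_pos
  have key : 2 * (a:ℝ) = (2 * t + 1) * N := by
    have h' : π * a / N = (2 * (t:ℝ) + 1) * π / 2 := ht
    have h'' : (2 * (a:ℝ)) * π = ((2 * (t:ℝ) + 1) * N) * π := by
      field_simp at h'
      nlinarith [h']
    exact mul_right_cancel₀ (ne_of_gt hπ) h''
  have h3 : (0:ℝ) < 2 * (a:ℝ) := by positivity
  have h4 : 2 * (a:ℝ) < 2 * N := by
    have : ((a:ℕ):ℝ) ≤ ((N-1:ℕ):ℝ) := by exact_mod_cast h2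
    rw [Nat.cast_sub (by omega)] at this
    push_cast at this
    linarith
  have ht0 : t = 0 := by
    by_contra ht0
    rcases lt_or_gt_of_ne ht0 with hlt | hgt
    · have h5 : (t:ℝ) ≤ -1 := by exact_mod_cast (by omega : t ≤ -1)
      have h6 : 2 * (t:ℝ) + 1 ≤ -1 := by linarith
      nlinarith [mul_le_mul_of_nonneg_right h6 (le_of_lt hNpos)]
    · have h5 : (1:ℝ) ≤ (t:ℝ) := by exact_mod_cast hgt
      have h6 : (3:ℝ) ≤ 2 * (t:ℝ) + 1 := by linarith
      nlinarith [mul_le_mul_of_nonneg_right h6 (le_of_lt hNpos)]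
  rw [ht0] at key
  have : 2 * (a:ℝ) = (N:ℝ) := by rw [key]; push_cast; ring
  exact_mod_cast this.symm

lemma lam_ne_zero (m n j k : ℕ) (hm : 0 < m) (hn : 0 < n) (hmn : Even (m * n))
    (hj1 : 1 ≤ j) (hj2 : j ≤ m) (hk1 : 1 ≤ k) (hk2 : k ≤ n) :
    (((2 * Real.cos (π * j / (m + 1)) : ℝ) : ℂ) +
      2 * Complex.I * ((Real.cos (π * k / (n + 1)) : ℝ) : ℂ)) ≠ 0 := by
  intro h
  set a := Real.cos (π * j / (m + 1)) with ha
  set b := Real.cos (π * k / (n + 1)) with hb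
  have h1 : (2:ℝ) * a = 0 := by
    have := congrArg Complex.re h
    simpa using this
  have h2 : (2:ℝ) * b = 0 := by
    have := congrArg Complex.im h
    simpa using this
  have ha0 : a = 0 := by linarith
  have hb0 : b = 0 := by linarith
  have hm2 : m + 1 = 2 * j := by
    apply cos_zero_half (m+1) j hj1 (by omega) (by omega)
    have e : π * (j:ℝ) / (((m+1 : ℕ)):ℝ) = π * j / ((m:ℝ)+1) := by push_cast; ring
    rw [e, ← ha]; exact ha0
  have hn2 : n + 1 = 2 * k := by
    apply cos_zero_half (n+1) k hk1 (by omega) (by omega)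
    have e : π * (k:ℝ) / (((n+1 : ℕ)):ℝ) = π * k / ((n:ℝ)+1) := by push_cast; ring
    rw [e, ← hb]; exact hb0
  have hmo : Odd m := ⟨j - 1, by omega⟩
  have hno : Odd n := ⟨k - 1, by omega⟩
  exact (Nat.not_odd_iff_even.mpr hmn) (hmo.mul hno)

lemma K_decomp (m n : ℕ) (u w : Fin m × Fin n) :
    kasteleyn m n u w =
      (if u.1.val + 1 = w.1.val ∨ w.1.val + 1 = u.1.val then (1:ℂ) else 0)
        * (if u.2 = w.2 then (1:ℂ) else 0)
      + Complex.I * ((if u.1 = w.1 then (1:ℂ) else 0)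
        * (if u.2.val + 1 = w.2.val ∨ w.2.val + 1 = u.2.val then (1:ℂ) else 0)) := by
  simp only [kasteleyn, Matrix.of_apply]
  split_ifs <;> simp_all [Fin.ext_iff] <;> omega

-- complexified 1D eigen
lemma eigen1C (m j : ℕ) (hm : 1 ≤ m) (x : Fin m) :
    ∑ x' : Fin m, (if x.val + 1 = x'.val ∨ x'.val + 1 = x.val then (1:ℂ) else 0)
        * ((Real.sin (π * j * ((x'.val:ℝ) + 1) / ((m:ℝ)+1)) : ℝ) : ℂ)
      = ((2 * Real.cos (π * j / ((m:ℝ)+1)) : ℝ) : ℂ)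
        * ((Real.sin (π * j * ((x.val:ℝ) + 1) / ((m:ℝ)+1)) : ℝ) : ℂ) := by
  have h := eigen1D m j hm x
  calc ∑ x' : Fin m, (if x.val + 1 = x'.val ∨ x'.val + 1 = x.val then (1:ℂ) else 0)
        * ((Real.sin (π * j * ((x'.val:ℝ) + 1) / ((m:ℝ)+1)) : ℝ) : ℂ)
      = ∑ x' : Fin m, (((if x.val + 1 = x'.val ∨ x'.val + 1 = x.val then (1:ℝ) else 0)
        * Real.sin (π * j * ((x'.val:ℝ) + 1) / ((m:ℝ)+1)) : ℝ) : ℂ) := by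
        apply Finset.sum_congr rfl
        intro x' _
        split_ifs <;> simp
    _ = (((∑ x' : Fin m, (if x.val + 1 = x'.val ∨ x'.val + 1 = x.val then (1:ℝ) else 0)
        * Real.sin (π * j * ((x'.val:ℝ) + 1) / ((m:ℝ)+1))) : ℝ) : ℂ) := by
        rw [Complex.ofReal_sum]
    _ = _ := by rw [h]; push_cast; ring

-- complexified orthogonality over Icc 1 m
lemma orthC (m : ℕ) (hm : 1 ≤ m) (x y : Fin m) :
    ∑ j ∈ Finset.Icc 1 m, ((Real.sin (π * j * ((x.val:ℝ) + 1) / ((m:ℝ)+1)) : ℝ) : ℂ)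
        * ((Real.sin (π * j * ((y.val:ℝ) + 1) / ((m:ℝ)+1)) : ℝ) : ℂ)
      = if x = y then ((((m:ℝ)+1)/2 : ℝ) : ℂ) else 0 := by
  have h := orth1D (m+1) (x.val+1) (y.val+1) (by omega) (by omega) (by omega) (by omega) (by omega)
  simp only [Nat.add_sub_cancel] at h
  calc ∑ j ∈ Finset.Icc 1 m, ((Real.sin (π * j * ((x.val:ℝ) + 1) / ((m:ℝ)+1)) : ℝ) : ℂ)
        * ((Real.sin (π * j * ((y.val:ℝ) + 1) / ((m:ℝ)+1)) : ℝ) : ℂ)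
      = (((∑ j ∈ Finset.Icc 1 m, Real.sin (π * j * ((x.val+1:ℕ):ℝ) / ((m+1:ℕ):ℝ))
          * Real.sin (π * j * ((y.val+1:ℕ):ℝ) / ((m+1:ℕ):ℝ))) : ℝ) : ℂ) := by
        rw [Complex.ofReal_sum]
        apply Finset.sum_congr rfl
        intro jj _
        push_cast
        ring
    _ = _ := by
        rw [h]
        by_cases hxy : x = y
        · rw [if_pos (by omega), if_pos hxy]
          push_cast; ring
        · rw [if_neg (by simp [Fin.ext_iff] at hxy ⊢; omega), if_neg hxy]
          norm_num

lemma eigen2D (m n j k : ℕ) (hm : 1 ≤ m) (hn : 1 ≤ n) (u : Fin m × Fin n) :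
    ∑ w : Fin m × Fin n, kasteleyn m n u w *
      (((Real.sin (π * j * ((w.1.val:ℝ) + 1) / ((m:ℝ)+1)) : ℝ) : ℂ) *
       ((Real.sin (π * k * ((w.2.val:ℝ) + 1) / ((n:ℝ)+1)) : ℝ) : ℂ))
    = (((2 * Real.cos (π * j / ((m:ℝ)+1)) : ℝ) : ℂ) +
        2 * Complex.I * ((Real.cos (π * k / ((n:ℝ)+1)) : ℝ) : ℂ)) *
      (((Real.sin (π * j * ((u.1.val:ℝ) + 1) / ((m:ℝ)+1)) : ℝ) : ℂ) *
       ((Real.sin (π * k * ((u.2.val:ℝ) + 1) / ((n:ℝ)+1)) : ℝ) : ℂ)) := by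
  set A : Fin m → ℂ := fun a => ((Real.sin (π * j * ((a.val:ℝ)+1)/((m:ℝ)+1)):ℝ):ℂ) with hA
  set B : Fin n → ℂ := fun b => ((Real.sin (π * k * ((b.val:ℝ)+1)/((n:ℝ)+1)):ℝ):ℂ) with hB
  rw [Fintype.sum_prod_type]
  have hterm : ∀ (a : Fin m) (b : Fin n), kasteleyn m n u (a,b) * (A a * B b)
      = ((if u.1.val + 1 = a.val ∨ a.val + 1 = u.1.val then (1:ℂ) else 0) * A a)
          * ((if u.2 = b then (1:ℂ) else 0) * B b)
        + Complex.I * (((if u.1 = a then (1:ℂ) else 0) * A a)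
          * ((if u.2.val + 1 = b.val ∨ b.val + 1 = u.2.val then (1:ℂ) else 0) * B b)) := by
    intro a b
    rw [K_decomp]
    ring
  rw [Finset.sum_congr rfl (fun a _ => Finset.sum_congr rfl (fun b _ => hterm a b))]
  have hsplit : ∑ a : Fin m, ∑ b : Fin n,
      (((if u.1.val + 1 = a.val ∨ a.val + 1 = u.1.val then (1:ℂ) else 0) * A a)
          * ((if u.2 = b then (1:ℂ) else 0) * B b)
        + Complex.I * (((if u.1 = a then (1:ℂ) else 0) * A a)
          * ((if u.2.val + 1 = b.val ∨ b.val + 1 = u.2.val then (1:ℂ) else 0) * B b)))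
      = (∑ a : Fin m, (if u.1.val + 1 = a.val ∨ a.val + 1 = u.1.val then (1:ℂ) else 0) * A a)
          * (∑ b : Fin n, (if u.2 = b then (1:ℂ) else 0) * B b)
        + Complex.I * ((∑ a : Fin m, (if u.1 = a then (1:ℂ) else 0) * A a)
          * (∑ b : Fin n, (if u.2.val + 1 = b.val ∨ b.val + 1 = u.2.val then (1:ℂ) else 0) * B b)) := by
    rw [Finset.sum_mul_sum, Finset.sum_mul_sum, Finset.mul_sum]
    rw [← Finset.sum_add_distrib]
    apply Finset.sum_congr rfl
    intro a _
    rw [Finset.mul_sum, ← Finset.sum_add_distrib]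
  rw [hsplit]
  have hd1 : (∑ b : Fin n, (if u.2 = b then (1:ℂ) else 0) * B b) = B u.2 := by
    simp [ite_mul, Finset.sum_ite_eq]
  have hd2 : (∑ a : Fin m, (if u.1 = a then (1:ℂ) else 0) * A a) = A u.1 := by
    simp [ite_mul, Finset.sum_ite_eq]
  rw [hd1, hd2, eigen1C m j hm u.1, eigen1C n k hn u.2]
  simp only [hA, hB]
  push_cast
  ring

lemma complete2D (m n : ℕ) (hm : 1 ≤ m) (hn : 1 ≤ n) (u v : Fin m × Fin n) :
    ((4 / (((m:ℝ) + 1) * ((n:ℝ) + 1)) : ℝ) : ℂ) *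
      ∑ j ∈ Finset.Icc 1 m, ∑ k ∈ Finset.Icc 1 n,
        (((Real.sin (π * j * ((u.1.val:ℝ) + 1) / ((m:ℝ)+1)) : ℝ) : ℂ) *
         ((Real.sin (π * k * ((u.2.val:ℝ) + 1) / ((n:ℝ)+1)) : ℝ) : ℂ)) *
        (((Real.sin (π * j * ((v.1.val:ℝ) + 1) / ((m:ℝ)+1)) : ℝ) : ℂ) *
         ((Real.sin (π * k * ((v.2.val:ℝ) + 1) / ((n:ℝ)+1)) : ℝ) : ℂ))
      = if u = v then 1 else 0 := by
  have hre : ∑ j ∈ Finset.Icc 1 m, ∑ k ∈ Finset.Icc 1 n,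
        (((Real.sin (π * j * ((u.1.val:ℝ) + 1) / ((m:ℝ)+1)) : ℝ) : ℂ) *
         ((Real.sin (π * k * ((u.2.val:ℝ) + 1) / ((n:ℝ)+1)) : ℝ) : ℂ)) *
        (((Real.sin (π * j * ((v.1.val:ℝ) + 1) / ((m:ℝ)+1)) : ℝ) : ℂ) *
         ((Real.sin (π * k * ((v.2.val:ℝ) + 1) / ((n:ℝ)+1)) : ℝ) : ℂ))
      = (∑ j ∈ Finset.Icc 1 m,
          ((Real.sin (π * j * ((u.1.val:ℝ) + 1) / ((m:ℝ)+1)) : ℝ) : ℂ) *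
          ((Real.sin (π * j * ((v.1.val:ℝ) + 1) / ((m:ℝ)+1)) : ℝ) : ℂ)) *
        (∑ k ∈ Finset.Icc 1 n,
          ((Real.sin (π * k * ((u.2.val:ℝ) + 1) / ((n:ℝ)+1)) : ℝ) : ℂ) *
          ((Real.sin (π * k * ((v.2.val:ℝ) + 1) / ((n:ℝ)+1)) : ℝ) : ℂ)) := by
    rw [Finset.sum_mul_sum]
    apply Finset.sum_congr rfl; intro j _
    apply Finset.sum_congr rfl; intro k _
    ring
  rw [hre, orthC m hm u.1 v.1, orthC n hn u.2 v.2]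
  by_cases h1 : u.1 = v.1
  · by_cases h2 : u.2 = v.2
    · rw [if_pos h1, if_pos h2, if_pos (Prod.ext h1 h2)]
      have hm0 : ((m:ℝ) + 1) ≠ 0 := by positivity
      have hn0 : ((n:ℝ) + 1) ≠ 0 := by positivity
      rw [← Complex.ofReal_mul, ← Complex.ofReal_mul, ← Complex.ofReal_one]
      congr 1
      field_simp
      ring
    · rw [if_neg h2, if_neg (fun h => h2 (congrArg Prod.snd h))]
      ring
  · rw [if_neg h1, if_neg (fun h => h1 (congrArg Prod.fst h))]
    ring

theorem kasteleyn_inverse (m n : ℕ) (hm : 0 < m) (hn : 0 < n) (hmn : Even (m * n)) :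
    IsUnit (kasteleyn m n).det ∧
    ∀ u v : Fin m × Fin n,
      (kasteleyn m n)⁻¹ u v =
        ((4 / ((m + 1) * (n + 1)) : ℝ) : ℂ) *
          ∑ j ∈ Finset.Icc 1 m, ∑ k ∈ Finset.Icc 1 n,
            ((Real.sin (Real.pi * j * (u.1.val + 1) / (m + 1)) : ℂ) *
              (Real.sin (Real.pi * k * (u.2.val + 1) / (n + 1)) : ℂ)) *
            ((Real.sin (Real.pi * j * (v.1.val + 1) / (m + 1)) : ℂ) *
              (Real.sin (Real.pi * k * (v.2.val + 1) / (n + 1)) : ℂ)) /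
            (((2 * Real.cos (Real.pi * j / (m + 1)) : ℝ) : ℂ) +
              2 * Complex.I * ((Real.cos (Real.pi * k / (n + 1)) : ℝ) : ℂ)) := by
  set B : Matrix (Fin m × Fin n) (Fin m × Fin n) ℂ := Matrix.of fun u v =>
    ((4 / ((m + 1) * (n + 1)) : ℝ) : ℂ) *
      ∑ j ∈ Finset.Icc 1 m, ∑ k ∈ Finset.Icc 1 n,
        ((Real.sin (Real.pi * j * (u.1.val + 1) / (m + 1)) : ℂ) *
          (Real.sin (Real.pi * k * (u.2.val + 1) / (n + 1)) : ℂ)) *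
        ((Real.sin (Real.pi * j * (v.1.val + 1) / (m + 1)) : ℂ) *
          (Real.sin (Real.pi * k * (v.2.val + 1) / (n + 1)) : ℂ)) /
        (((2 * Real.cos (Real.pi * j / (m + 1)) : ℝ) : ℂ) +
          2 * Complex.I * ((Real.cos (Real.pi * k / (n + 1)) : ℝ) : ℂ)) with hB
  have hKB : kasteleyn m n * B = 1 := by
    ext u v
    rw [Matrix.mul_apply, Matrix.one_apply]
    have step1 : ∀ w, kasteleyn m n u w * B w v
        = ((4 / ((m + 1) * (n + 1)) : ℝ) : ℂ) *
          ∑ j ∈ Finset.Icc 1 m, ∑ k ∈ Finset.Icc 1 n,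
            (kasteleyn m n u w *
              ((Real.sin (Real.pi * j * (w.1.val + 1) / (m + 1)) : ℂ) *
                (Real.sin (Real.pi * k * (w.2.val + 1) / (n + 1)) : ℂ))) *
            (((Real.sin (Real.pi * j * (v.1.val + 1) / (m + 1)) : ℂ) *
              (Real.sin (Real.pi * k * (v.2.val + 1) / (n + 1)) : ℂ)) /
            (((2 * Real.cos (Real.pi * j / (m + 1)) : ℝ) : ℂ) +
              2 * Complex.I * ((Real.cos (Real.pi * k / (n + 1)) : ℝ) : ℂ))) := by
      intro w
      rw [hB]
      simp only [Matrix.of_apply]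
      rw [mul_left_comm]
      congr 1
      rw [Finset.mul_sum]
      apply Finset.sum_congr rfl; intro j _
      rw [Finset.mul_sum]
      apply Finset.sum_congr rfl; intro k _
      ring
    rw [Finset.sum_congr rfl (fun w _ => step1 w), ← Finset.mul_sum]
    rw [Finset.sum_comm]
    have step2 : ∀ j ∈ Finset.Icc 1 m,
        (∑ w : Fin m × Fin n, ∑ k ∈ Finset.Icc 1 n,
          (kasteleyn m n u w *
            ((Real.sin (Real.pi * j * (w.1.val + 1) / (m + 1)) : ℂ) *
              (Real.sin (Real.pi * k * (w.2.val + 1) / (n + 1)) : ℂ))) *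
          (((Real.sin (Real.pi * j * (v.1.val + 1) / (m + 1)) : ℂ) *
            (Real.sin (Real.pi * k * (v.2.val + 1) / (n + 1)) : ℂ)) /
          (((2 * Real.cos (Real.pi * j / (m + 1)) : ℝ) : ℂ) +
            2 * Complex.I * ((Real.cos (Real.pi * k / (n + 1)) : ℝ) : ℂ))))
        = ∑ k ∈ Finset.Icc 1 n,
            ((Real.sin (Real.pi * j * (u.1.val + 1) / (m + 1)) : ℂ) *
              (Real.sin (Real.pi * k * (u.2.val + 1) / (n + 1)) : ℂ)) *
            ((Real.sin (Real.pi * j * (v.1.val + 1) / (m + 1)) : ℂ) *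
              (Real.sin (Real.pi * k * (v.2.val + 1) / (n + 1)) : ℂ)) := by
      intro j hj
      rw [Finset.sum_comm]
      apply Finset.sum_congr rfl
      intro k hk
      rw [← Finset.sum_mul, eigen2D m n j k hm hn u]
      rw [Finset.mem_Icc] at hj hk
      have hlam := lam_ne_zero m n j k hm hn hmn hj.1 hj.2 hk.1 hk.2
      have haux : ∀ (L X Y : ℂ), L ≠ 0 → L * X * (Y / L) = X * Y := by
        intro L X Y hL; field_simp
      exact haux _ _ _ hlam
    rw [Finset.sum_congr rfl step2]
    rw [complete2D m n hm hn u v]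
  refine ⟨Matrix.isUnit_det_of_right_inverse hKB, ?_⟩
  intro u v
  rw [Matrix.inv_eq_right_inv hKB]
  rfl
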